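/- Let (X, 𝓑, μ, f) be a measure-preserving system and {E_n} a sequence of measurable subsets of X with E_{n₁} ⊆ E_{n₂} whenever n₁ ≥ n₂, and μ(E_n) → 0. Define H_r as the set of points x such that for infinitely many n, at least r of the events {f^{-k}E_n : 1 ≤ k ≤ n} contain x. Then μ(H_r Δ f^{-1}H_r) = 0, i.e., H_r is essentially f-invariant. -/

import Mathlib

open MeasureTheory Filter

private lemma measSet {X : Type*} [MeasurableSpace X]
    (f : X → X) (hfm : Measurable f)
    (E : ℕ → Set X) (hmeas : ∀ n, MeasurableSet (E n)) (n r : ℕ) :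
    MeasurableSet {x | r ≤ Set.ncard {k | 1 ≤ k ∧ k ≤ n ∧ f^[k] x ∈ E n}} := by
  have hSfin : ∀ x : X, ({k | 1 ≤ k ∧ k ≤ n ∧ f^[k] x ∈ E n}).Finite := by
    intro x
    apply (Set.finite_Icc 1 n).subset
    intro k hk
    exact ⟨hk.1, hk.2.1⟩
  have heq : {x | r ≤ Set.ncard {k | 1 ≤ k ∧ k ≤ n ∧ f^[k] x ∈ E n}}
      = ⋃ (T : Finset ℕ) (_ : T.card = r), ⋂ k ∈ T,
        {x | 1 ≤ k ∧ k ≤ n ∧ f^[k] x ∈ E n} := by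
    ext x
    simp only [Set.mem_setOf_eq, Set.mem_iUnion, Set.mem_iInter]
    constructor
    · intro h
      obtain ⟨t, hts, htc⟩ := Set.exists_subset_card_eq h
      have htfin : t.Finite := (hSfin x).subset hts
      refine ⟨htfin.toFinset, ?_, ?_⟩
      · rw [← htc, Set.ncard_eq_toFinset_card t htfin]
      · intro k hk
        exact hts (htfin.mem_toFinset.mp hk)
    · rintro ⟨T, hTc, hT⟩
      calc r = T.card := hTc.symm
        _ = (↑T : Set ℕ).ncard := (Set.ncard_coe_finset T).symm
        _ ≤ _ := Set.ncard_le_ncard (fun k hk => hT k hk) (hSfin x)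
  rw [heq]
  apply MeasurableSet.iUnion
  intro T
  apply MeasurableSet.iUnion
  intro _
  apply Set.Finite.measurableSet_biInter (T.finite_toSet)
  intro k _
  by_cases hk : 1 ≤ k ∧ k ≤ n
  · have : {x : X | 1 ≤ k ∧ k ≤ n ∧ f^[k] x ∈ E n} = f^[k] ⁻¹' (E n) := by
      ext x; simp [hk.1, hk.2]
    rw [this]
    exact (hfm.iterate k) (hmeas n)
  · have : {x : X | 1 ≤ k ∧ k ≤ n ∧ f^[k] x ∈ E n} = ∅ := by
      ext x; simp only [Set.mem_setOf_eq, Set.mem_empty_iff_false, iff_false]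
      rintro ⟨h1, h2, -⟩; exact hk ⟨h1, h2⟩
    rw [this]
    exact MeasurableSet.empty

theorem stmt0 {X : Type*} [MeasurableSpace X] (μ : Measure X) [IsProbabilityMeasure μ]
    (f : X → X) (hf : MeasurePreserving f μ μ)
    (E : ℕ → Set X) (hmeas : ∀ n, MeasurableSet (E n))
    (hmono : ∀ n₁ n₂, n₂ ≤ n₁ → E n₁ ⊆ E n₂)
    (hlim : Tendsto (fun n => μ (E n)) atTop (nhds 0))
    (r : ℕ) (hr : 1 ≤ r) :
    μ (symmDiff
        (⋂ m, ⋃ n, ⋃ (_ : m ≤ n),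
          {x | r ≤ Set.ncard {k | 1 ≤ k ∧ k ≤ n ∧ f^[k] x ∈ E n}})
        (f ⁻¹' (⋂ m, ⋃ n, ⋃ (_ : m ≤ n),
          {x | r ≤ Set.ncard {k | 1 ≤ k ∧ k ≤ n ∧ f^[k] x ∈ E n}}))) = 0 := by
  set H : Set X := ⋂ m, ⋃ n, ⋃ (_ : m ≤ n),
    {x | r ≤ Set.ncard {k | 1 ≤ k ∧ k ≤ n ∧ f^[k] x ∈ E n}} with hH
  have hfm : Measurable f := hf.measurable
  have hHmeas : MeasurableSet H := by
    apply MeasurableSet.iInter; intro m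
    apply MeasurableSet.iUnion; intro n
    apply MeasurableSet.iUnion; intro _
    exact measSet f hfm E hmeas n r
  have hmemH : ∀ x : X, x ∈ H ↔ ∀ m, ∃ n, m ≤ n ∧
      r ≤ Set.ncard {k | 1 ≤ k ∧ k ≤ n ∧ f^[k] x ∈ E n} := by
    intro x
    simp only [hH, Set.mem_iInter, Set.mem_iUnion, Set.mem_setOf_eq]
    exact ⟨fun h m => by obtain ⟨n, hn, hp⟩ := h m; exact ⟨n, hn, hp⟩,
      fun h m => by obtain ⟨n, hn, hp⟩ := h m; exact ⟨n, hn, hp⟩⟩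
  -- the null set
  have hIntMeas : MeasurableSet (⋂ n, E n) := MeasurableSet.iInter hmeas
  have hZ : μ (f ⁻¹' (⋂ n, E n)) = 0 := by
    rw [hf.measure_preimage hIntMeas.nullMeasurableSet]
    refine le_antisymm ?_ zero_le
    exact ge_of_tendsto' hlim (fun n => measure_mono (Set.iInter_subset E n))
  -- H \ f⁻¹ H ⊆ Z
  have hsub : H \ (f ⁻¹' H) ⊆ f ⁻¹' (⋂ n, E n) := by
    intro x hx
    by_contra hxZ
    apply hx.2
    simp only [Set.mem_preimage, Set.mem_iInter, not_forall] at hxZ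
    obtain ⟨n₀, hn₀⟩ := hxZ
    have hxH := (hmemH x).mp hx.1
    rw [Set.mem_preimage, hmemH]
    intro m
    obtain ⟨n, hn, hcard⟩ := hxH (max (m + 1) (n₀ + 1))
    have hnm : m + 1 ≤ n := le_trans (le_max_left _ _) hn
    have hnn₀ : n₀ ≤ n := le_trans (Nat.le_of_succ_le (le_max_right _ _)) hn
    have hfx : f x ∉ E n := fun h => hn₀ (hmono n n₀ hnn₀ h)
    refine ⟨n - 1, by omega, ?_⟩
    -- injection k ↦ k - 1
    have hsubset : {k | 1 ≤ k ∧ k ≤ n ∧ f^[k] x ∈ E n}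
        ⊆ (fun j => j + 1) '' {k | 1 ≤ k ∧ k ≤ n - 1 ∧ f^[k] (f x) ∈ E (n - 1)} := by
      rintro k ⟨h1, h2, h3⟩
      have hk1 : k ≠ 1 := by
        rintro rfl
        exact hfx (by simpa using h3)
      refine ⟨k - 1, ⟨by omega, by omega, ?_⟩, by show k - 1 + 1 = k; omega⟩
      have : f^[k - 1] (f x) = f^[k] x := by
        rw [← Function.iterate_succ_apply]
        congr 1
        omega
      rw [this]
      exact hmono n (n - 1) (by omega) h3
    have hfin : ((fun j => j + 1) ''
        {k | 1 ≤ k ∧ k ≤ n - 1 ∧ f^[k] (f x) ∈ E (n - 1)}).Finite := by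
      apply Set.Finite.image
      apply (Set.finite_Icc 1 (n - 1)).subset
      rintro k ⟨h1, h2, -⟩
      exact ⟨h1, h2⟩
    calc r ≤ Set.ncard {k | 1 ≤ k ∧ k ≤ n ∧ f^[k] x ∈ E n} := hcard
      _ ≤ _ := Set.ncard_le_ncard hsubset hfin
      _ = _ := Set.ncard_image_of_injective _ (fun a b => by omega)
  have h1 : μ (H \ (f ⁻¹' H)) = 0 :=
    measure_mono_null hsub hZ
  have h2 : μ ((f ⁻¹' H) \ H) = 0 := by
    have hpre : μ (f ⁻¹' H) = μ H := hf.measure_preimage hHmeas.nullMeasurableSet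
    have hpm : MeasurableSet (f ⁻¹' H) := hfm hHmeas
    have e1 : μ ((f ⁻¹' H) \ H) + μ (f ⁻¹' H ∩ H) = μ (f ⁻¹' H) := by
      rw [add_comm, measure_inter_add_diff _ hHmeas]
    have e2 : μ (H \ (f ⁻¹' H)) + μ (H ∩ f ⁻¹' H) = μ H := by
      rw [add_comm, measure_inter_add_diff _ hpm]
    rw [h1, zero_add, Set.inter_comm] at e2
    rw [hpre, ← e2] at e1
    have hfin : μ (f ⁻¹' H ∩ H) ≠ ⊤ := (measure_lt_top μ _).ne
    have : μ ((f ⁻¹' H) \ H) + μ (f ⁻¹' H ∩ H) = 0 + μ (f ⁻¹' H ∩ H) := by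
      rw [e1, zero_add]
    exact WithTop.add_right_cancel hfin this
  refine le_antisymm ?_ zero_le
  calc μ (symmDiff H (f ⁻¹' H)) ≤ μ (H \ (f ⁻¹' H)) + μ ((f ⁻¹' H) \ H) := by
        rw [Set.symmDiff_def]
        exact measure_union_le _ _
    _ = 0 := by rw [h1, h2, add_zero]
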